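/- arXiv:2411.11546 — 4 statements merged into one kernel-verified Lean document; each statement's English description precedes it below -/
import Mathlib

section
/- For every N, every m, and every permutation s of Fin m, the element w_{𝔰𝔬(N)}(s) := ∑_{i : Fin m → Fin N} ι(X (i 0) (i (s 0))) · ι(X (i 1) (i (s 1))) ⋯ ι(X (i (m−1)) (i (s (m−1)))) belongs to the center of the universal enveloping algebra U(𝔰𝔬(N)). -/
open Matrix in
noncomputable section
open Matrix

attribute [local instance 100] LieRing.ofAssociativeRing

/-- The anti-diagonal identity matrix. -/
def soJ (N : ℕ) : Matrix (Fin N) (Fin N) ℂ := fun i j => if j = Fin.rev i then 1 else 0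

lemma soJ_mul (N : ℕ) (A : Matrix (Fin N) (Fin N) ℂ) (i j : Fin N) :
    (soJ N * A) i j = A (Fin.rev i) j := by
  simp [soJ, Matrix.mul_apply, Fin.rev_eq_iff]

lemma mul_soJ (N : ℕ) (A : Matrix (Fin N) (Fin N) ℂ) (i j : Fin N) :
    (A * soJ N) i j = A i (Fin.rev j) := by
  classical
  simp only [Matrix.mul_apply, soJ]
  rw [Finset.sum_eq_single (Fin.rev j)]
  · simp
  · intro b _ hb
    rw [if_neg, mul_zero]
    intro h
    exact hb (by rw [h, Fin.rev_rev])
  · simp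

/-- The Lie algebra 𝔰𝔬(N). -/
def soL (N : ℕ) : LieSubalgebra ℂ (Matrix (Fin N) (Fin N) ℂ) where
  carrier := {A | Aᵀ * soJ N = -(soJ N * A)}
  add_mem' := by
    intro A B hA hB
    simp only [Set.mem_setOf_eq] at *
    rw [Matrix.transpose_add, Matrix.add_mul, hA, hB, Matrix.mul_add, neg_add]
  zero_mem' := by
    simp [Set.mem_setOf_eq]
  smul_mem' := by
    intro c A hA
    simp only [Set.mem_setOf_eq] at *
    rw [Matrix.transpose_smul, Matrix.smul_mul, hA, Matrix.mul_smul, smul_neg]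
  lie_mem' := by
    intro A B hA hB
    simp only [Set.mem_setOf_eq] at *
    rw [Ring.lie_def, Matrix.transpose_sub, Matrix.transpose_mul, Matrix.transpose_mul,
      Matrix.sub_mul, Matrix.mul_assoc, Matrix.mul_assoc, hA, hB, Matrix.mul_neg,
      Matrix.mul_neg, ← Matrix.mul_assoc, ← Matrix.mul_assoc, hA, hB, Matrix.neg_mul,
      Matrix.neg_mul, neg_neg, neg_neg, Matrix.mul_sub, Matrix.mul_assoc, Matrix.mul_assoc]
    abel

/-- The generators X_{ab} of 𝔰𝔬(N), as matrices. -/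
def soXmat (N : ℕ) (a b : Fin N) : Matrix (Fin N) (Fin N) ℂ :=
  Matrix.single a b 1 - Matrix.single (Fin.rev b) (Fin.rev a) 1

lemma soXmat_mem (N : ℕ) (a b : Fin N) : soXmat N a b ∈ soL N := by
  change (soXmat N a b)ᵀ * soJ N = -(soJ N * soXmat N a b)
  ext i j
  rw [mul_soJ]
  simp only [Matrix.neg_apply, soJ_mul, soXmat, Matrix.sub_apply, Matrix.transpose_apply,
    Matrix.single, Matrix.of_apply]
  simp only [Fin.rev_inj, Fin.rev_eq_iff, neg_sub]
  simp [and_comm]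

/-- The generators of 𝔰𝔬(N) as elements of the Lie algebra. -/
def soX (N : ℕ) (a b : Fin N) : soL N := ⟨soXmat N a b, soXmat_mem N a b⟩

/-- The extension of the 𝔰𝔬(N) weight system to permutations. -/
def wso (N : ℕ) {m : ℕ} (s : Equiv.Perm (Fin m)) :
    UniversalEnvelopingAlgebra ℂ ↥(soL N) :=
  ∑ i : Fin m → Fin N,
    (List.ofFn fun k : Fin m =>
      UniversalEnvelopingAlgebra.ι ℂ (soX N (i k) (i (s k)))).prod


lemma rev_swap {N : ℕ} {a b : Fin N} : a = Fin.rev b ↔ b = Fin.rev a := by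
  constructor <;> (rintro rfl; simp)

open Matrix in
lemma Emul {N : ℕ} (a b c d : Fin N) :
    Matrix.single a b (1:ℂ) * Matrix.single c d 1 =
      if b = c then Matrix.single a d 1 else 0 := by
  split_ifs with h
  · subst h; rw [Matrix.single_mul_single_same, one_mul]
  · exact Matrix.single_mul_single_of_ne (1:ℂ) a b c h 1

lemma soXmat_bracket {N : ℕ} (c d a b : Fin N) :
    ⁅soXmat N c d, soXmat N a b⁆ =
      (if d = a then soXmat N c b else 0) - (if b = c then soXmat N a d else 0)
      - (if b = Fin.rev d then soXmat N c (Fin.rev a) else 0)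
      + (if a = Fin.rev c then soXmat N (Fin.rev b) d else 0) := by
  simp only [Ring.lie_def, soXmat, sub_mul, mul_sub, Emul, Fin.rev_rev, Fin.rev_inj]
  by_cases h1 : d = a <;> by_cases h2 : b = c <;> by_cases h3 : b = Fin.rev d <;>
    by_cases h4 : a = Fin.rev c <;>
    simp_all [rev_swap, eq_comm] <;> abel


lemma soX_bracket {N : ℕ} (c d a b : Fin N) :
    ⁅soX N c d, soX N a b⁆ =
      (if d = a then soX N c b else 0) - (if b = c then soX N a d else 0)
      - (if b = Fin.rev d then soX N c (Fin.rev a) else 0)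
      + (if a = Fin.rev c then soX N (Fin.rev b) d else 0) := by
  apply Subtype.ext
  push_cast [LieSubalgebra.coe_bracket, apply_ite (Subtype.val : soL N → _)]
  simpa [soX] using soXmat_bracket c d a b

lemma soX_rev {N : ℕ} (a b : Fin N) : soX N (Fin.rev b) (Fin.rev a) = - soX N a b := by
  apply Subtype.ext
  simp [soX, soXmat]

lemma soL_span {N : ℕ} (x : soL N) :
    x = ∑ a : Fin N, ∑ b : Fin N, ((x : Matrix (Fin N) (Fin N) ℂ) a b / 2) • soX N a b := by
  have hx : ∀ i j, (x : Matrix (Fin N) (Fin N) ℂ) (Fin.rev j) (Fin.rev i)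
      = - (x : Matrix (Fin N) (Fin N) ℂ) i j := by
    have h := x.2
    change (x : Matrix (Fin N) (Fin N) ℂ)ᵀ * soJ N = -(soJ N * (x : Matrix (Fin N) (Fin N) ℂ)) at h
    intro i j
    have := congrFun (congrFun h (Fin.rev i)) j
    rw [mul_soJ] at this
    simpa [Matrix.neg_apply, soJ_mul] using this
  apply Subtype.ext
  have coe_smul : ∀ (r : ℂ) (y : soL N), ((r • y : soL N) : Matrix (Fin N) (Fin N) ℂ) = r • (y : Matrix (Fin N) (Fin N) ℂ) := fun _ _ => rfl
  simp only [AddSubmonoidClass.coe_finset_sum, coe_smul]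
  ext i j
  simp only [Matrix.sum_apply, Matrix.smul_apply, soX, soXmat, Matrix.sub_apply,
    Matrix.single, Matrix.of_apply, smul_eq_mul, mul_sub, mul_ite, mul_one, mul_zero,
    Finset.sum_sub_distrib, ite_and]
  simp only [Fin.rev_eq_iff, Finset.sum_ite_eq', Finset.mem_univ, if_true]
  rw [Finset.sum_comm]
  simp only [Finset.sum_ite_eq', Finset.mem_univ, if_true]
  rw [hx i j]
  ring


lemma mem_center_of_commute_ι {N : ℕ} (z : UniversalEnvelopingAlgebra ℂ (soL N))
    (h : ∀ x : soL N, Commute (UniversalEnvelopingAlgebra.ι ℂ x) z) :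
    z ∈ Subalgebra.center ℂ (UniversalEnvelopingAlgebra ℂ (soL N)) := by
  rw [Subalgebra.mem_center_iff]
  intro y
  have hy : ∃ t, UniversalEnvelopingAlgebra.mkAlgHom ℂ (soL N) t = y :=
    by unfold UniversalEnvelopingAlgebra.mkAlgHom; exact RingCon.mkₐ_surjective _ y
  obtain ⟨t, rfl⟩ := hy
  induction t using TensorAlgebra.induction with
  | algebraMap r => rw [AlgHom.commutes]; exact (Algebra.commutes r z)
  | ι x => rw [← UniversalEnvelopingAlgebra.ι_apply]; exact h x
  | mul a b ha hb => rw [_root_.map_mul, mul_assoc, hb, ← mul_assoc, ha, mul_assoc]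
  | add a b ha hb => rw [_root_.map_add, add_mul, ha, hb, mul_add]


section Slot

variable {A : Type*} [Ring A]

/-- Product of the list `f 0, ..., f (m-1)` with the `k`-th entry replaced by `a`. -/
def slotProd {m : ℕ} (f : Fin m → A) (k : Fin m) (a : A) : A :=
  (List.ofFn fun j => if j = k then a else f j).prod

lemma slotProd_congr {m : ℕ} {f g : Fin m → A} {k k' : Fin m} {a b : A}
    (h : ∀ j, (if j = k then a else f j) = (if j = k' then b else g j)) :
    slotProd f k a = slotProd g k' b := by
  unfold slotProd
  rw [funext h]

lemma slotProd_zero_fin {m : ℕ} (f : Fin (m + 1) → A) (a : A) :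
    slotProd f 0 a = a * (List.ofFn fun j : Fin m => f j.succ).prod := by
  simp [slotProd, List.ofFn_succ, Fin.succ_ne_zero]

lemma slotProd_succ {m : ℕ} (f : Fin (m + 1) → A) (k : Fin m) (a : A) :
    slotProd f k.succ a = f 0 * slotProd (fun j => f j.succ) k a := by
  simp [slotProd, List.ofFn_succ, (Fin.succ_ne_zero k).symm, Fin.succ_inj]

lemma slotProd_add {m : ℕ} (f : Fin m → A) (k : Fin m) (a b : A) :
    slotProd f k (a + b) = slotProd f k a + slotProd f k b := by
  induction m with
  | zero => exact k.elim0
  | succ n ih =>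
    cases k using Fin.cases with
    | zero => simp [slotProd_zero_fin, add_mul]
    | succ k => simp [slotProd_succ, ih, mul_add]

lemma slotProd_zero' {m : ℕ} (f : Fin m → A) (k : Fin m) :
    slotProd f k 0 = 0 := by
  induction m with
  | zero => exact k.elim0
  | succ n ih =>
    cases k using Fin.cases with
    | zero => simp [slotProd_zero_fin]
    | succ k => simp [slotProd_succ, ih]

lemma slotProd_neg {m : ℕ} (f : Fin m → A) (k : Fin m) (a : A) :
    slotProd f k (-a) = - slotProd f k a := by
  have h := slotProd_add f k a (-a)
  rw [add_neg_cancel, slotProd_zero'] at h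
  exact (neg_eq_of_add_eq_zero_right h.symm).symm

lemma slotProd_sub {m : ℕ} (f : Fin m → A) (k : Fin m) (a b : A) :
    slotProd f k (a - b) = slotProd f k a - slotProd f k b := by
  rw [sub_eq_add_neg, slotProd_add, slotProd_neg, sub_eq_add_neg]

lemma slotProd_ite {m : ℕ} (f : Fin m → A) (k : Fin m) (P : Prop) [Decidable P] (a : A) :
    slotProd f k (if P then a else 0) = if P then slotProd f k a else 0 := by
  split <;> simp [slotProd_zero']

lemma lie_mul' (x a b : A) : ⁅x, a * b⁆ = ⁅x, a⁆ * b + a * ⁅x, b⁆ := by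
  simp only [Ring.lie_def]
  noncomm_ring

lemma lie_ofFn_prod {m : ℕ} (x : A) (f : Fin m → A) :
    ⁅x, (List.ofFn f).prod⁆ = ∑ k : Fin m, slotProd f k ⁅x, f k⁆ := by
  induction m with
  | zero => simp [Ring.lie_def]
  | succ n ih =>
    rw [List.ofFn_succ, List.prod_cons, lie_mul', Fin.sum_univ_succ, slotProd_zero_fin,
      ih (fun j => f j.succ), Finset.mul_sum]
    congr 1
    exact Finset.sum_congr rfl fun k _ => (slotProd_succ f k _).symm

end Slot


lemma sum_swap_update {m N : ℕ} {M : Type*} [AddCommMonoid M] (k : Fin m) (c d : Fin N)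
    (T H : (Fin m → Fin N) → M)
    (hTH : ∀ i : Fin m → Fin N, i k = c → T (Function.update i k d) = H i) :
    (∑ i : Fin m → Fin N, if i k = d then T i else 0)
      = ∑ i : Fin m → Fin N, if i k = c then H i else 0 := by
  classical
  set σ := Equiv.swap c d with hσ
  have hinv : Function.Involutive
      (fun i : Fin m → Fin N => Function.update i k (σ (i k))) := by
    intro i
    simp only [Function.update_self, Function.update_idem, hσ, Equiv.swap_apply_self]
    exact Function.update_eq_self k i
  rw [← Equiv.sum_comp (hinv.toPerm _) (fun i => if i k = d then T i else 0)]
  apply Finset.sum_congr rfl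
  intro i _
  show (if (Function.update i k (σ (i k))) k = d then T (Function.update i k (σ (i k))) else 0)
      = (if i k = c then H i else 0)
  rw [Function.update_self]
  by_cases h : i k = c
  · rw [if_pos h, h, Equiv.swap_apply_left, if_pos rfl, hTH i h]
  · have h2 : σ (i k) ≠ d := by
      intro hh
      apply h
      have := congrArg σ hh
      rw [Equiv.swap_apply_self] at this
      rw [this, hσ, Equiv.swap_apply_right]
    rw [if_neg h2, if_neg h]

lemma soX_bracket' {N : ℕ} (c d a b : Fin N) :
    ⁅soX N c d, soX N a b⁆ =
      (if a = d then soX N c b else 0) - (if b = c then soX N a d else 0)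
      + (if b = Fin.rev d then soX N a (Fin.rev c) else 0)
      - (if a = Fin.rev c then soX N (Fin.rev d) b else 0) := by
  rw [soX_bracket]
  have h3 : soX N c (Fin.rev a) = - soX N a (Fin.rev c) := by
    have := soX_rev a (Fin.rev c); rw [Fin.rev_rev] at this; rw [this]
  have h4 : soX N (Fin.rev b) d = - soX N (Fin.rev d) b := by
    have := soX_rev (Fin.rev d) b; rw [Fin.rev_rev] at this; rw [this]
  rw [h3, h4]
  have e1 : (if d = a then soX N c b else 0) = (if a = d then soX N c b else 0) := by
    simp [eq_comm]
  have e3 : (if b = Fin.rev d then -soX N a (Fin.rev c) else 0)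
      = -(if b = Fin.rev d then soX N a (Fin.rev c) else 0) := by split <;> simp
  have e4 : (if a = Fin.rev c then -soX N (Fin.rev d) b else 0)
      = -(if a = Fin.rev c then soX N (Fin.rev d) b else 0) := by split <;> simp
  rw [e1, e3, e4]
  abel


set_option maxHeartbeats 1000000 in
set_option synthInstance.maxHeartbeats 100000 in
/-- w_{𝔰𝔬(N)}(s) belongs to the center of the universal enveloping algebra. -/
theorem wso_mem_center (N m : ℕ) (s : Equiv.Perm (Fin m)) :
    wso N s ∈ Subalgebra.center ℂ (UniversalEnvelopingAlgebra ℂ ↥(soL N)) := by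
  classical
  have key : ∀ c d : Fin N,
      ⁅(UniversalEnvelopingAlgebra.ι ℂ (soX N c d) :
          UniversalEnvelopingAlgebra ℂ (soL N)), wso N s⁆ = 0 := by
    intro c d
    set F : (Fin m → Fin N) → Fin m → UniversalEnvelopingAlgebra ℂ (soL N) := fun i k =>
      UniversalEnvelopingAlgebra.ι ℂ (soX N (i k) (i (s k))) with hF
    have hw : wso N s = ∑ i : Fin m → Fin N, (List.ofFn (F i)).prod := rfl
    rw [hw]
    have lie_sum' : ∀ (x : UniversalEnvelopingAlgebra ℂ (soL N))
        (g : (Fin m → Fin N) → UniversalEnvelopingAlgebra ℂ (soL N)),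
        ⁅x, ∑ i : Fin m → Fin N, g i⁆ = ∑ i : Fin m → Fin N, ⁅x, g i⁆ := by
      intro x g
      simp only [Ring.lie_def, Finset.mul_sum, Finset.sum_mul, ← Finset.sum_sub_distrib]
    rw [lie_sum']
    have step : ∀ i : Fin m → Fin N,
        ⁅(UniversalEnvelopingAlgebra.ι ℂ (soX N c d) :
            UniversalEnvelopingAlgebra ℂ (soL N)), (List.ofFn (F i)).prod⁆
          = ∑ k : Fin m,
            ((if i k = d then slotProd (F i) k
                (UniversalEnvelopingAlgebra.ι ℂ (soX N c (i (s k)))) else 0)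
            - (if i (s k) = c then slotProd (F i) k
                (UniversalEnvelopingAlgebra.ι ℂ (soX N (i k) d)) else 0)
            + (if i (s k) = Fin.rev d then slotProd (F i) k
                (UniversalEnvelopingAlgebra.ι ℂ (soX N (i k) (Fin.rev c))) else 0)
            - (if i k = Fin.rev c then slotProd (F i) k
                (UniversalEnvelopingAlgebra.ι ℂ (soX N (Fin.rev d) (i (s k)))) else 0)) := by
      intro i
      rw [lie_ofFn_prod]
      apply Finset.sum_congr rfl
      intro k _
      have hb : ⁅(UniversalEnvelopingAlgebra.ι ℂ (soX N c d) :
            UniversalEnvelopingAlgebra ℂ (soL N)), F i k⁆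
          = UniversalEnvelopingAlgebra.ι ℂ ⁅soX N c d, soX N (i k) (i (s k))⁆ := by
        rw [LieHom.map_lie]
      rw [hb, soX_bracket', _root_.map_sub, _root_.map_add, _root_.map_sub,
        apply_ite (UniversalEnvelopingAlgebra.ι ℂ), apply_ite (UniversalEnvelopingAlgebra.ι ℂ),
        apply_ite (UniversalEnvelopingAlgebra.ι ℂ), apply_ite (UniversalEnvelopingAlgebra.ι ℂ),
        _root_.map_zero, slotProd_sub, slotProd_add, slotProd_sub, slotProd_ite, slotProd_ite,
        slotProd_ite, slotProd_ite]
    rw [Finset.sum_congr rfl fun i _ => step i]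
    simp only [Finset.sum_sub_distrib, Finset.sum_add_distrib]
    have claim1 :
        (∑ i : Fin m → Fin N, ∑ k : Fin m, (if i k = d then slotProd (F i) k
            (UniversalEnvelopingAlgebra.ι ℂ (soX N c (i (s k)))) else 0))
        = ∑ i : Fin m → Fin N, ∑ k : Fin m, (if i (s k) = c then slotProd (F i) k
            (UniversalEnvelopingAlgebra.ι ℂ (soX N (i k) d)) else 0) := by
      rw [Finset.sum_comm]
      conv_rhs => rw [Finset.sum_comm]
      conv_rhs => rw [← Equiv.sum_comp s.symm (fun k => ∑ i : Fin m → Fin N,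
        (if i (s k) = c then slotProd (F i) k
            (UniversalEnvelopingAlgebra.ι ℂ (soX N (i k) d)) else 0))]
      apply Finset.sum_congr rfl
      intro k _
      simp only [Equiv.apply_symm_apply]
      apply sum_swap_update k c d
      intro i hik
      apply slotProd_congr
      intro j
      by_cases hj : j = k
      · subst hj
        rw [if_pos rfl]
        by_cases h2 : j = s.symm j
        · have hsk : s j = j := by conv_lhs => rw [h2, Equiv.apply_symm_apply]
          rw [if_pos h2, hsk, Function.update_self]
          have : i (s.symm j) = c := by rw [← h2, hik]
          rw [this]
        · have hsk : s j ≠ j := fun h => h2 (by rw [Equiv.eq_symm_apply]; exact h)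
          rw [if_neg h2, Function.update_of_ne hsk, hF]
          simp only
          rw [hik]
      · rw [if_neg hj]
        by_cases hj2 : j = s.symm k
        · have hsj : s j = k := by rw [hj2, Equiv.apply_symm_apply]
          rw [if_pos hj2, hF]
          simp only
          rw [Function.update_of_ne hj, hsj, Function.update_self, hj2]
        · have hsj : s j ≠ k := fun h => hj2 (by rw [← h, Equiv.symm_apply_apply])
          rw [if_neg hj2, hF]
          simp only
          rw [Function.update_of_ne hj, Function.update_of_ne hsj]
    have claim2 :
        (∑ i : Fin m → Fin N, ∑ k : Fin m, (if i (s k) = Fin.rev d then slotProd (F i) k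
            (UniversalEnvelopingAlgebra.ι ℂ (soX N (i k) (Fin.rev c))) else 0))
        = ∑ i : Fin m → Fin N, ∑ k : Fin m, (if i k = Fin.rev c then slotProd (F i) k
            (UniversalEnvelopingAlgebra.ι ℂ (soX N (Fin.rev d) (i (s k)))) else 0) := by
      rw [Finset.sum_comm]
      conv_rhs => rw [Finset.sum_comm]
      conv_rhs => rw [← Equiv.sum_comp s (fun k => ∑ i : Fin m → Fin N,
        (if i k = Fin.rev c then slotProd (F i) k
            (UniversalEnvelopingAlgebra.ι ℂ (soX N (Fin.rev d) (i (s k)))) else 0))]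
      apply Finset.sum_congr rfl
      intro k _
      apply sum_swap_update (s k) (Fin.rev c) (Fin.rev d)
      intro i hik
      apply slotProd_congr
      intro j
      by_cases hj : j = k
      · subst hj
        rw [if_pos rfl]
        by_cases h2 : j = s j
        · rw [if_pos h2]
          have h1 : Function.update i (s j) (Fin.rev d) j = Fin.rev d := by
            rw [show Function.update i (s j) (Fin.rev d) j
                = Function.update i (s j) (Fin.rev d) (s j) from by rw [← h2]]
            rw [Function.update_self]
          have h5 : i (s (s j)) = Fin.rev c := by rw [← h2]; exact hik
          rw [h1, h5]
        · rw [if_neg h2, Function.update_of_ne (fun h : j = s j => h2 h)]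
          rw [hF]
          simp only
          rw [hik]
      · rw [if_neg hj]
        by_cases hj2 : j = s k
        · rw [if_pos hj2]
          subst hj2
          rw [hF]
          simp only
          rw [Function.update_self]
          have hne : s (s k) ≠ s k := fun h => hj (s.injective h)
          rw [Function.update_of_ne hne]
        · rw [if_neg hj2, hF]
          simp only
          rw [Function.update_of_ne hj2,
            Function.update_of_ne (fun h : s j = s k => hj (s.injective h))]
    rw [claim1, claim2, sub_self, zero_add, sub_self]
  apply mem_center_of_commute_ι
  intro x
  rw [soL_span x]
  have hl : ∀ (y : soL N), UniversalEnvelopingAlgebra.ι ℂ y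
      = (UniversalEnvelopingAlgebra.ι ℂ (L := soL N)).toLinearMap y := fun _ => rfl
  rw [hl, map_sum]
  apply Commute.sum_left
  intro a _
  rw [map_sum]
  apply Commute.sum_left
  intro b _
  rw [_root_.map_smul]
  apply Commute.smul_left
  have h := key a b
  rw [Ring.lie_def, sub_eq_zero] at h
  exact h

end
end

section
/- For every M, every m, and every permutation s of Fin m, the element ∑_{i : Fin m → Fin (2M)} ι(X (i 0) (i (s 0))) · ι(X (i 1) (i (s 1))) ⋯ ι(X (i (m−1)) (i (s (m−1)))) belongs to the center of the universal enveloping algebra U(𝔰𝔭(2M)). -/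
open Matrix in
noncomputable section
open Matrix

attribute [local instance 100] LieRing.ofAssociativeRing

/-- The sign ε. -/
def spEps (M : ℕ) (i : Fin (2 * M)) : ℂ := if (i : ℕ) < M then 1 else -1

lemma spEps_rev (M : ℕ) (i : Fin (2 * M)) : spEps M (Fin.rev i) = -spEps M i := by
  have := i.isLt
  have h : (Fin.rev i : ℕ) = 2 * M - (i + 1) := Fin.val_rev i
  simp only [spEps, h]
  split_ifs <;> first | omega | norm_num

lemma spEps_sq (M : ℕ) (i : Fin (2 * M)) : spEps M i * spEps M i = 1 := by
  simp only [spEps]; split_ifs <;> norm_num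

/-- The matrix K defining the symplectic form. -/
def spK (M : ℕ) : Matrix (Fin (2 * M)) (Fin (2 * M)) ℂ :=
  fun i j => if j = Fin.rev i then spEps M i else 0

lemma spK_mul (M : ℕ) (A : Matrix (Fin (2 * M)) (Fin (2 * M)) ℂ) (i j : Fin (2 * M)) :
    (spK M * A) i j = spEps M i * A (Fin.rev i) j := by
  simp [spK, Matrix.mul_apply, Fin.rev_eq_iff]

lemma mul_spK (M : ℕ) (A : Matrix (Fin (2 * M)) (Fin (2 * M)) ℂ) (i j : Fin (2 * M)) :
    (A * spK M) i j = A i (Fin.rev j) * spEps M (Fin.rev j) := by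
  classical
  simp only [Matrix.mul_apply, spK]
  rw [Finset.sum_eq_single (Fin.rev j)]
  · simp [Fin.rev_rev]
  · intro b _ hb
    rw [if_neg, mul_zero]
    intro h
    exact hb (by rw [h, Fin.rev_rev])
  · simp

/-- The Lie algebra 𝔰𝔭(2M). -/
def spL (M : ℕ) : LieSubalgebra ℂ (Matrix (Fin (2 * M)) (Fin (2 * M)) ℂ) where
  carrier := {A | Aᵀ * spK M = -(spK M * A)}
  add_mem' := by
    intro A B hA hB
    simp only [Set.mem_setOf_eq] at *
    rw [Matrix.transpose_add, Matrix.add_mul, hA, hB, Matrix.mul_add, neg_add]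
  zero_mem' := by
    simp [Set.mem_setOf_eq]
  smul_mem' := by
    intro c A hA
    simp only [Set.mem_setOf_eq] at *
    rw [Matrix.transpose_smul, Matrix.smul_mul, hA, Matrix.mul_smul, smul_neg]
  lie_mem' := by
    intro A B hA hB
    simp only [Set.mem_setOf_eq] at *
    rw [Ring.lie_def, Matrix.transpose_sub, Matrix.transpose_mul, Matrix.transpose_mul,
      Matrix.sub_mul, Matrix.mul_assoc, Matrix.mul_assoc, hA, hB, Matrix.mul_neg,
      Matrix.mul_neg, ← Matrix.mul_assoc, ← Matrix.mul_assoc, hA, hB, Matrix.neg_mul,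
      Matrix.neg_mul, neg_neg, neg_neg, Matrix.mul_sub, Matrix.mul_assoc, Matrix.mul_assoc]
    abel

/-- The generators X_{ab} of 𝔰𝔭(2M), as matrices. -/
def spXmat (M : ℕ) (a b : Fin (2 * M)) : Matrix (Fin (2 * M)) (Fin (2 * M)) ℂ :=
  Matrix.single a b 1 -
    spEps M a • spEps M b • Matrix.single (Fin.rev b) (Fin.rev a) 1

lemma spXmat_mem (M : ℕ) (a b : Fin (2 * M)) : spXmat M a b ∈ spL M := by
  change (spXmat M a b)ᵀ * spK M = -(spK M * spXmat M a b)
  ext i j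
  rw [mul_spK, Matrix.neg_apply, spK_mul]
  simp only [spXmat, Matrix.sub_apply, Matrix.transpose_apply, Matrix.smul_apply,
    Matrix.single, Matrix.of_apply, smul_eq_mul]
  simp only [Fin.rev_inj, Fin.rev_eq_iff, Fin.rev_rev]
  by_cases hP : a = Fin.rev j ∧ b = i <;> by_cases hQ : a = Fin.rev i ∧ b = j
  · obtain ⟨ha, hb⟩ := hP
    subst ha; subst hb
    obtain ⟨-, hij⟩ := hQ
    subst hij
    simp only [and_self, if_true, if_pos rfl]
    rw [spEps_rev]
    ring
  · obtain ⟨ha, hb⟩ := hP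
    subst ha; subst hb
    simp only [and_comm] at hQ
    simp only [and_self, if_true, if_pos rfl, hQ, if_false, if_neg hQ]
    rw [if_neg (fun h => hQ ⟨h.2, h.1⟩), spEps_rev]
    linear_combination (spEps M j) * spEps_sq M b
  · obtain ⟨ha, hb⟩ := hQ
    subst ha; subst hb
    simp only [and_comm] at hP
    simp only [and_self, if_true, if_pos rfl, hP, if_false, if_neg hP]
    rw [if_neg (fun h => hP ⟨h.2, h.1⟩), spEps_rev, spEps_rev]
    linear_combination (-spEps M i) * spEps_sq M b
  · simp only [if_neg hP, if_neg hQ,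
      if_neg (fun h : b = i ∧ a = Fin.rev j => hP ⟨h.2, h.1⟩),
      if_neg (fun h : b = j ∧ a = Fin.rev i => hQ ⟨h.2, h.1⟩)]
    ring

/-- The generators of 𝔰𝔭(2M) as elements of the Lie algebra. -/
def spX (M : ℕ) (a b : Fin (2 * M)) : spL M := ⟨spXmat M a b, spXmat_mem M a b⟩

/-- The extension of the 𝔰𝔭(2M) weight system to permutations. -/
def wsp (M : ℕ) {m : ℕ} (s : Equiv.Perm (Fin m)) :
    UniversalEnvelopingAlgebra ℂ ↥(spL M) :=
  ∑ i : Fin m → Fin (2 * M),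
    (List.ofFn fun k : Fin m =>
      UniversalEnvelopingAlgebra.ι ℂ (spX M (i k) (i (s k)))).prod
open Matrix UniversalEnvelopingAlgebra in
section
variable (M : ℕ)

lemma spL_rel {Y : Matrix (Fin (2*M)) (Fin (2*M)) ℂ} (hY : Y ∈ spL M) (i j : Fin (2*M)) :
    Y (Fin.rev j) i * spEps M (Fin.rev j) = -(spEps M i * Y (Fin.rev i) j) := by
  have h : (Yᵀ * spK M) i j = (-(spK M * Y)) i j := by
    rw [show Yᵀ * spK M = -(spK M * Y) from hY]
  rwa [mul_spK, Matrix.neg_apply, spK_mul, Matrix.transpose_apply] at h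

lemma mul_stdBasis (A : Matrix (Fin (2*M)) (Fin (2*M)) ℂ) (a b i j : Fin (2*M)) :
    (A * Matrix.single a b (1:ℂ)) i j = if j = b then A i a else 0 := by
  simp only [Matrix.mul_apply, Matrix.single, Matrix.of_apply, mul_ite, mul_one, mul_zero]
  rw [Finset.sum_eq_single a]
  · simp [eq_comm]
  · intro c _ hc
    rw [if_neg]; rintro ⟨h, -⟩; exact hc h.symm
  · simp

lemma stdBasis_mul (A : Matrix (Fin (2*M)) (Fin (2*M)) ℂ) (a b i j : Fin (2*M)) :
    (Matrix.single a b (1:ℂ) * A) i j = if i = a then A b j else 0 := by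
  simp only [Matrix.mul_apply, Matrix.single, Matrix.of_apply, ite_mul, one_mul, zero_mul]
  rw [Finset.sum_eq_single b]
  · simp [eq_comm]
  · intro c _ hc
    rw [if_neg]; rintro ⟨-, h⟩; exact hc h.symm
  · simp
end
open Matrix UniversalEnvelopingAlgebra in
section
variable (M : ℕ)

lemma spXmat_apply (a b i j : Fin (2*M)) :
    spXmat M a b i j = (if i = a ∧ j = b then 1 else 0)
      - spEps M a * spEps M b * (if i = Fin.rev b ∧ j = Fin.rev a then 1 else 0) := by
  simp only [spXmat, Matrix.single, Matrix.sub_apply, Matrix.smul_apply,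
    Matrix.of_apply, smul_eq_mul, mul_ite, mul_one, mul_zero, @eq_comm _ _ i, @eq_comm _ _ j]

lemma spL_rev_left {Y : Matrix (Fin (2*M)) (Fin (2*M)) ℂ} (hY : Y ∈ spL M) (a b : Fin (2*M)) :
    Y (Fin.rev a) b = spEps M a * spEps M b * Y (Fin.rev b) a := by
  have h := spL_rel M hY b a
  rw [spEps_rev] at h
  linear_combination (-(spEps M a)) * h - Y (Fin.rev a) b * spEps_sq M a

lemma mul_spXmat (A : Matrix (Fin (2*M)) (Fin (2*M)) ℂ) (a b i j : Fin (2*M)) :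
    (A * spXmat M a b) i j = (if j = b then A i a else 0)
      - spEps M a * (spEps M b * (if j = Fin.rev a then A i (Fin.rev b) else 0)) := by
  simp only [spXmat, Matrix.mul_sub, Matrix.mul_smul, Matrix.sub_apply, Matrix.smul_apply,
    mul_stdBasis, smul_eq_mul]

lemma spXmat_mul (A : Matrix (Fin (2*M)) (Fin (2*M)) ℂ) (a b i j : Fin (2*M)) :
    (spXmat M a b * A) i j = (if i = a then A b j else 0)
      - spEps M a * (spEps M b * (if i = Fin.rev b then A (Fin.rev a) j else 0)) := by
  simp only [spXmat, Matrix.sub_mul, Matrix.smul_mul, Matrix.sub_apply, Matrix.smul_apply,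
    stdBasis_mul, smul_eq_mul]

lemma lie_spXmat {Y : Matrix (Fin (2*M)) (Fin (2*M)) ℂ} (hY : Y ∈ spL M) (a b : Fin (2*M)) :
    ⁅Y, spXmat M a b⁆ = ∑ c : Fin (2*M),
      (Y c a • spXmat M c b - Y b c • spXmat M a c) := by
  ext i j
  rw [Ring.lie_def, Matrix.sub_apply, mul_spXmat, spXmat_mul, Matrix.sum_apply]
  have T1 : ∑ c : Fin (2*M), Y c a * (if i = c ∧ j = b then (1:ℂ) else 0)
      = if j = b then Y i a else 0 := by
    rw [Finset.sum_eq_single i]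
    · simp
    · intro c _ hc; rw [if_neg, mul_zero]; rintro ⟨h, -⟩; exact hc h.symm
    · simp
  have T2 : ∑ c : Fin (2*M), Y c a * (spEps M c * spEps M b *
        (if i = Fin.rev b ∧ j = Fin.rev c then (1:ℂ) else 0))
      = if i = Fin.rev b then Y (Fin.rev j) a * (spEps M (Fin.rev j) * spEps M b) else 0 := by
    rw [Finset.sum_eq_single (Fin.rev j)]
    · simp only [Fin.rev_rev, eq_self_iff_true, and_true]; split_ifs <;> ring
    · intro c _ hc; rw [if_neg, mul_zero, mul_zero]
      rintro ⟨-, h⟩; exact hc (by rw [h, Fin.rev_rev])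
    · simp
  have T3 : ∑ c : Fin (2*M), Y b c * (if i = a ∧ j = c then (1:ℂ) else 0)
      = if i = a then Y b j else 0 := by
    rw [Finset.sum_eq_single j]
    · simp [and_comm]
    · intro c _ hc; rw [if_neg, mul_zero]; rintro ⟨-, h⟩; exact hc h.symm
    · simp
  have T4 : ∑ c : Fin (2*M), Y b c * (spEps M a * spEps M c *
        (if i = Fin.rev c ∧ j = Fin.rev a then (1:ℂ) else 0))
      = if j = Fin.rev a then Y b (Fin.rev i) * (spEps M a * spEps M (Fin.rev i)) else 0 := by
    rw [Finset.sum_eq_single (Fin.rev i)]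
    · simp only [Fin.rev_rev, eq_self_iff_true, true_and]; split_ifs <;> ring
    · intro c _ hc; rw [if_neg, mul_zero, mul_zero]
      rintro ⟨h, -⟩; exact hc (by rw [h, Fin.rev_rev])
    · simp
  calc (if j = b then Y i a else 0)
      - spEps M a * (spEps M b * (if j = Fin.rev a then Y i (Fin.rev b) else 0))
      - ((if i = a then Y b j else 0)
        - spEps M a * (spEps M b * (if i = Fin.rev b then Y (Fin.rev a) j else 0)))
      = (∑ c : Fin (2*M), Y c a * (if i = c ∧ j = b then (1:ℂ) else 0))
        - (∑ c : Fin (2*M), Y c a * (spEps M c * spEps M b *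
            (if i = Fin.rev b ∧ j = Fin.rev c then (1:ℂ) else 0)))
        - (∑ c : Fin (2*M), Y b c * (if i = a ∧ j = c then (1:ℂ) else 0))
        + (∑ c : Fin (2*M), Y b c * (spEps M a * spEps M c *
            (if i = Fin.rev c ∧ j = Fin.rev a then (1:ℂ) else 0))) := by
        rw [T1, T2, T3, T4]
        have k1 : Y i (Fin.rev b)
            = spEps M (Fin.rev i) * spEps M (Fin.rev b) * Y b (Fin.rev i) := by
          have h := spL_rev_left M hY (Fin.rev i) (Fin.rev b)
          rwa [Fin.rev_rev, Fin.rev_rev] at h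
        have k2 : Y (Fin.rev a) j = spEps M a * spEps M j * Y (Fin.rev j) a :=
          spL_rev_left M hY a j
        simp only [spEps_rev] at k1 ⊢
        rw [show (if j = Fin.rev a then Y i (Fin.rev b) else 0)
            = (if j = Fin.rev a then (1:ℂ) else 0) * Y i (Fin.rev b) from by split_ifs <;> ring,
          show (if i = Fin.rev b then Y (Fin.rev a) j else 0)
            = (if i = Fin.rev b then (1:ℂ) else 0) * Y (Fin.rev a) j from by split_ifs <;> ring,
          show (if i = Fin.rev b then Y (Fin.rev j) a * (-spEps M j * spEps M b) else 0)
            = (if i = Fin.rev b then (1:ℂ) else 0) * (Y (Fin.rev j) a * (-spEps M j * spEps M b))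
            from by split_ifs <;> ring,
          show (if j = Fin.rev a then Y b (Fin.rev i) * (spEps M a * -spEps M i) else 0)
            = (if j = Fin.rev a then (1:ℂ) else 0) * (Y b (Fin.rev i) * (spEps M a * -spEps M i))
            from by split_ifs <;> ring]
        linear_combination
          ((if i = Fin.rev b then (1:ℂ) else 0) * (spEps M a * spEps M b)) * k2
          - ((if j = Fin.rev a then (1:ℂ) else 0) * (spEps M a * spEps M b)) * k1
          + ((if i = Fin.rev b then (1:ℂ) else 0) * (spEps M j * spEps M b * Y (Fin.rev j) a))
            * spEps_sq M a
          - ((if j = Fin.rev a then (1:ℂ) else 0) * (spEps M a * spEps M i * Y b (Fin.rev i)))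
            * spEps_sq M b
    _ = ∑ c : Fin (2*M), (Y c a • spXmat M c b - Y b c • spXmat M a c) i j := by
        rw [← Finset.sum_sub_distrib, ← Finset.sum_sub_distrib, ← Finset.sum_add_distrib]
        apply Finset.sum_congr rfl
        intro c _
        simp only [Matrix.sub_apply, Matrix.smul_apply, smul_eq_mul, spXmat_apply]
        ring
end
open Matrix UniversalEnvelopingAlgebra in
section
variable (M : ℕ)

lemma lie_spX (Y : spL M) (a b : Fin (2*M)) :
    ⁅Y, spX M a b⁆ = ∑ c : Fin (2*M),
      ((Y : Matrix (Fin (2*M)) (Fin (2*M)) ℂ) c a • spX M c b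
        - (Y : Matrix (Fin (2*M)) (Fin (2*M)) ℂ) b c • spX M a c) := by
  apply Subtype.ext
  have hcoe : ((∑ c : Fin (2*M),
      ((Y : Matrix (Fin (2*M)) (Fin (2*M)) ℂ) c a • spX M c b
        - (Y : Matrix (Fin (2*M)) (Fin (2*M)) ℂ) b c • spX M a c) : spL M) :
        Matrix (Fin (2*M)) (Fin (2*M)) ℂ)
      = ∑ c : Fin (2*M),
      ((Y : Matrix (Fin (2*M)) (Fin (2*M)) ℂ) c a • spXmat M c b
        - (Y : Matrix (Fin (2*M)) (Fin (2*M)) ℂ) b c • spXmat M a c) := by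
    push_cast
    rfl
  rw [hcoe]
  exact lie_spXmat M Y.2 a b

-- commutator with a product of generators
lemma comm_prod_ofFn {m : ℕ} (Y : spL M) (Z : Fin m → spL M) :
    ι ℂ Y * (List.ofFn fun k => ι ℂ (Z k)).prod
      - (List.ofFn fun k => ι ℂ (Z k)).prod * ι ℂ Y
    = ∑ k : Fin m,
        ((List.ofFn fun j => ι ℂ (Z j)).take (k : ℕ)).prod * ι ℂ ⁅Y, Z k⁆ *
          ((List.ofFn fun j => ι ℂ (Z j)).drop ((k : ℕ)+1)).prod := by
  induction m with
  | zero => simp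
  | succ n ih =>
    rw [List.ofFn_succ, List.prod_cons, Fin.sum_univ_succ]
    have hih := ih (fun i => Z i.succ)
    calc ι ℂ Y * (ι ℂ (Z 0) * (List.ofFn fun i => ι ℂ (Z i.succ)).prod)
        - ι ℂ (Z 0) * (List.ofFn fun i => ι ℂ (Z i.succ)).prod * ι ℂ Y
        = (ι ℂ Y * ι ℂ (Z 0) - ι ℂ (Z 0) * ι ℂ Y) *
            (List.ofFn fun i => ι ℂ (Z i.succ)).prod
          + ι ℂ (Z 0) * (ι ℂ Y * (List.ofFn fun i => ι ℂ (Z i.succ)).prod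
              - (List.ofFn fun i => ι ℂ (Z i.succ)).prod * ι ℂ Y) := by noncomm_ring
      _ = ι ℂ ⁅Y, Z 0⁆ * (List.ofFn fun i => ι ℂ (Z i.succ)).prod
          + ι ℂ (Z 0) * ∑ k : Fin n,
            ((List.ofFn fun j => ι ℂ (Z j.succ)).take (k : ℕ)).prod * ι ℂ ⁅Y, Z k.succ⁆ *
              ((List.ofFn fun j => ι ℂ (Z j.succ)).drop ((k : ℕ)+1)).prod := by
          rw [hih, LieHom.map_lie, Ring.lie_def]
      _ = _ := by
          rw [Finset.mul_sum]
          congr 1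
          · simp
          · apply Finset.sum_congr rfl
            intro k _
            simp only [Fin.val_succ, List.take_succ_cons, List.drop_succ_cons, List.prod_cons,
              mul_assoc]

lemma prod_ofFn_split {m : ℕ} (F : Fin m → UniversalEnvelopingAlgebra ℂ ↥(spL M)) (k : Fin m) :
    (List.ofFn F).prod
      = ((List.ofFn F).take (k : ℕ)).prod * F k * ((List.ofFn F).drop ((k : ℕ)+1)).prod := by
  conv_lhs => rw [← List.take_append_drop (k : ℕ) (List.ofFn F)]
  rw [List.prod_append]
  have hk : (k : ℕ) < (List.ofFn F).length := by simp
  rw [List.drop_eq_getElem_cons hk, List.prod_cons, List.getElem_ofFn]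
  simp [mul_assoc]

lemma take_ofFn_update {m : ℕ} (F : Fin m → UniversalEnvelopingAlgebra ℂ ↥(spL M)) (k : Fin m) (x : UniversalEnvelopingAlgebra ℂ ↥(spL M)) :
    (List.ofFn (Function.update F k x)).take (k : ℕ) = (List.ofFn F).take (k : ℕ) := by
  apply List.ext_getElem
  · simp
  · intro n h1 h2
    simp only [List.getElem_take, List.getElem_ofFn]
    apply Function.update_of_ne
    intro he
    have hv := congrArg Fin.val he
    simp only [List.length_take, List.length_ofFn, lt_min_iff] at h1
    simp only [] at hv
    omega

lemma drop_ofFn_update {m : ℕ} (F : Fin m → UniversalEnvelopingAlgebra ℂ ↥(spL M)) (k : Fin m) (x : UniversalEnvelopingAlgebra ℂ ↥(spL M)) :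
    (List.ofFn (Function.update F k x)).drop ((k : ℕ)+1) = (List.ofFn F).drop ((k : ℕ)+1) := by
  apply List.ext_getElem
  · simp
  · intro n h1 h2
    simp only [List.getElem_drop, List.getElem_ofFn]
    apply Function.update_of_ne
    intro he
    have hv := congrArg Fin.val he
    simp only [] at hv
    omega

lemma prod_ofFn_update {m : ℕ} (F : Fin m → UniversalEnvelopingAlgebra ℂ ↥(spL M)) (k : Fin m) (x : UniversalEnvelopingAlgebra ℂ ↥(spL M)) :
    (List.ofFn (Function.update F k x)).prod
      = ((List.ofFn F).take (k : ℕ)).prod * x * ((List.ofFn F).drop ((k : ℕ)+1)).prod := by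
  rw [prod_ofFn_split M (Function.update F k x) k, take_ofFn_update, drop_ofFn_update,
    Function.update_self]
end
open Matrix UniversalEnvelopingAlgebra in
section
set_option synthInstance.maxHeartbeats 1000000
set_option maxHeartbeats 1000000
variable (M : ℕ)

/-- products of generators indexed by two functions -/
def spG (m : ℕ) (a b : Fin m → Fin (2*M)) : UniversalEnvelopingAlgebra ℂ ↥(spL M) :=
  (List.ofFn fun k => ι ℂ (spX M (a k) (b k))).prod

lemma comm_spG {m : ℕ} (Y : spL M) (a b : Fin m → Fin (2*M)) :
    ι ℂ Y * spG M m a b - spG M m a b * ι ℂ Y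
    = ∑ k : Fin m, ∑ c : Fin (2*M),
        ((Y : Matrix (Fin (2*M)) (Fin (2*M)) ℂ) c (a k) • spG M m (Function.update a k c) b
          - (Y : Matrix (Fin (2*M)) (Fin (2*M)) ℂ) (b k) c
              • spG M m a (Function.update b k c)) := by
  rw [spG, comm_prod_ofFn M Y (fun k => spX M (a k) (b k))]
  apply Finset.sum_congr rfl
  intro k _
  have hι : ∀ z : spL M, ι ℂ z
      = (ι ℂ : ↥(spL M) →ₗ⁅ℂ⁆ UniversalEnvelopingAlgebra ℂ ↥(spL M)).toLinearMap z :=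
    fun _ => rfl
  rw [lie_spX, hι, map_sum, Finset.mul_sum, Finset.sum_mul]
  apply Finset.sum_congr rfl
  intro c _
  have ha : (List.ofFn fun j => ι ℂ (spX M (Function.update a k c j) (b j))).prod
      = ((List.ofFn fun j => ι ℂ (spX M (a j) (b j))).take (k : ℕ)).prod
        * ι ℂ (spX M c (b k))
        * ((List.ofFn fun j => ι ℂ (spX M (a j) (b j))).drop ((k : ℕ)+1)).prod := by
    rw [show (fun j => ι ℂ (spX M (Function.update a k c j) (b j)))
        = Function.update (fun j => ι ℂ (spX M (a j) (b j))) k (ι ℂ (spX M c (b k))) from ?_,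
      prod_ofFn_update]
    funext j
    by_cases hj : j = k
    · subst hj; simp
    · rw [Function.update_of_ne hj, Function.update_of_ne hj]
  have hb : (List.ofFn fun j => ι ℂ (spX M (a j) (Function.update b k c j))).prod
      = ((List.ofFn fun j => ι ℂ (spX M (a j) (b j))).take (k : ℕ)).prod
        * ι ℂ (spX M (a k) c)
        * ((List.ofFn fun j => ι ℂ (spX M (a j) (b j))).drop ((k : ℕ)+1)).prod := by
    rw [show (fun j => ι ℂ (spX M (a j) (Function.update b k c j)))
        = Function.update (fun j => ι ℂ (spX M (a j) (b j))) k (ι ℂ (spX M (a k) c)) from ?_,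
      prod_ofFn_update]
    funext j
    by_cases hj : j = k
    · subst hj; simp
    · rw [Function.update_of_ne hj, Function.update_of_ne hj]
  rw [spG, spG, ha, hb, map_sub, LinearMap.map_smul, LinearMap.map_smul, ← hι, ← hι]
  rw [mul_sub, sub_mul, mul_smul_comm, mul_smul_comm, smul_mul_assoc, smul_mul_assoc]

/-- the equiv (i, c) ↦ (update i k c, i k) -/
def updEquiv (m : ℕ) (k : Fin m) :
    ((Fin m → Fin (2*M)) × Fin (2*M)) ≃ ((Fin m → Fin (2*M)) × Fin (2*M)) where
  toFun p := (Function.update p.1 k p.2, p.1 k)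
  invFun p := (Function.update p.1 k p.2, p.1 k)
  left_inv p := by
    ext <;> simp [Function.update_idem, Function.update_eq_self, Function.update_self]
  right_inv p := by
    ext <;> simp [Function.update_idem, Function.update_eq_self, Function.update_self]

lemma update_comp_perm {m : ℕ} (s : Equiv.Perm (Fin m)) (j : Fin m → Fin (2*M)) (k : Fin m)
    (d : Fin (2*M)) :
    (fun t => Function.update j k d (s t))
      = Function.update (fun t => j (s t)) (s.symm k) d := by
  funext t
  rw [Function.update_apply, Function.update_apply]
  by_cases h : s t = k
  · rw [if_pos h, if_pos (by rw [← h, Equiv.symm_apply_apply])]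
  · rw [if_neg h, if_neg (fun ht => h (by rw [ht, Equiv.apply_symm_apply]))]

def spA {m : ℕ} (s : Equiv.Perm (Fin m)) (y : Matrix (Fin (2*M)) (Fin (2*M)) ℂ) (k : Fin m) :
    UniversalEnvelopingAlgebra ℂ ↥(spL M) :=
  ∑ i : Fin m → Fin (2*M), ∑ c : Fin (2*M),
    y c (i k) • spG M m (Function.update i k c) (fun t => i (s t))

def spB {m : ℕ} (s : Equiv.Perm (Fin m)) (y : Matrix (Fin (2*M)) (Fin (2*M)) ℂ) (k : Fin m) :
    UniversalEnvelopingAlgebra ℂ ↥(spL M) :=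
  ∑ i : Fin m → Fin (2*M), ∑ c : Fin (2*M),
    y (i (s k)) c • spG M m i (Function.update (fun t => i (s t)) k c)

lemma spA_eq_spB {m : ℕ} (s : Equiv.Perm (Fin m)) (y : Matrix (Fin (2*M)) (Fin (2*M)) ℂ)
    (k : Fin m) : spA M s y k = spB M s y (s.symm k) := by
  rw [spA, spB, ← Fintype.sum_prod_type', ← Fintype.sum_prod_type']
  rw [← Equiv.sum_comp (updEquiv M m k)
    (fun p : (Fin m → Fin (2*M)) × Fin (2*M) =>
      y p.2 (p.1 k) • spG M m (Function.update p.1 k p.2) (fun t => p.1 (s t)))]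
  apply Finset.sum_congr rfl
  intro p _
  simp only [updEquiv, Equiv.coe_fn_mk, Function.update_self, Function.update_idem,
    Function.update_eq_self, Equiv.apply_symm_apply]
  rw [update_comp_perm M s p.1 k p.2]

lemma comm_wsp {m : ℕ} (s : Equiv.Perm (Fin m)) (Y : spL M) :
    ι ℂ Y * wsp M s = wsp M s * ι ℂ Y := by
  rw [← sub_eq_zero]
  have hw : wsp M s = ∑ i : Fin m → Fin (2*M), spG M m i (fun t => i (s t)) := rfl
  rw [hw, Finset.mul_sum, Finset.sum_mul, ← Finset.sum_sub_distrib]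
  rw [Finset.sum_congr rfl (fun i _ => comm_spG M Y i (fun t => i (s t)))]
  rw [Finset.sum_congr rfl
    (fun i _ => Finset.sum_congr rfl (fun k _ => Finset.sum_sub_distrib _ _))]
  rw [Finset.sum_congr rfl (fun i _ => Finset.sum_sub_distrib _ _), Finset.sum_sub_distrib,
    sub_eq_zero]
  set y : Matrix (Fin (2*M)) (Fin (2*M)) ℂ := (Y : Matrix (Fin (2*M)) (Fin (2*M)) ℂ) with hy
  calc ∑ i : Fin m → Fin (2*M), ∑ k : Fin m, ∑ c : Fin (2*M),
        y c (i k) • spG M m (Function.update i k c) (fun t => i (s t))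
      = ∑ k : Fin m, spA M s y k := by
        rw [Finset.sum_comm]; rfl
    _ = ∑ k : Fin m, spB M s y (s.symm k) := by
        exact Finset.sum_congr rfl (fun k _ => spA_eq_spB M s y k)
    _ = ∑ k : Fin m, spB M s y k := Equiv.sum_comp s.symm (spB M s y)
    _ = _ := by
        rw [Finset.sum_comm]; rfl
end

open Matrix in
set_option synthInstance.maxHeartbeats 1000000 in
set_option maxHeartbeats 1000000 in
/-- w_{𝔰𝔭(2M)}(s) belongs to the center of the universal enveloping algebra. -/
theorem wsp_mem_center (M m : ℕ) (s : Equiv.Perm (Fin m)) :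
    wsp M s ∈ Subalgebra.center ℂ (UniversalEnvelopingAlgebra ℂ ↥(spL M)) := by
  rw [Subalgebra.mem_center_iff]
  intro z
  obtain ⟨x, rfl⟩ :=
    (show Function.Surjective (UniversalEnvelopingAlgebra.mkAlgHom ℂ ↥(spL M)) from by
      intro z; obtain ⟨x, rfl⟩ := Quotient.mk''_surjective z; exact ⟨x, rfl⟩) z
  induction x using TensorAlgebra.induction with
  | algebraMap r =>
    rw [AlgHom.commutes]
    exact Algebra.commutes r (wsp M s)
  | ι v =>
    have hv : (UniversalEnvelopingAlgebra.mkAlgHom ℂ ↥(spL M))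
        (TensorAlgebra.ι ℂ v) = UniversalEnvelopingAlgebra.ι ℂ v := rfl
    rw [hv]
    exact comm_wsp M s v
  | mul p q hp hq =>
    rw [_root_.map_mul, mul_assoc, hq, ← mul_assoc, hp, mul_assoc]
  | add p q hp hq =>
    rw [_root_.map_add, add_mul, mul_add, hp, hq]

end
end

section
/- Multiplicativity of w_{𝔰𝔬(N)} under concatenation: for all m, n, every permutation s of Fin m and every permutation t of Fin n, let s⊕t be the permutation of Fin (m+n) obtained by transporting Equiv.Perm.sumCongr s t along the equivalence finSumFinEquiv : Fin m ⊕ Fin n ≃ Fin (m+n) (so s⊕t acts as s on the first m elements and as t on the last n elements). Then w_{𝔰𝔬(N)}(s⊕t) = w_{𝔰𝔬(N)}(s) * w_{𝔰𝔬(N)}(t) in U(𝔰𝔬(N)). -/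
open Matrix in
noncomputable section
open Matrix

attribute [local instance 100] LieRing.ofAssociativeRing

/-- Multiplicativity of w_{𝔰𝔬(N)} under concatenation of permutations. -/
theorem wso_multiplicative (N m n : ℕ) (s : Equiv.Perm (Fin m)) (t : Equiv.Perm (Fin n)) :
    wso N (Equiv.permCongr finSumFinEquiv (Equiv.Perm.sumCongr s t)) =
      wso N s * wso N t := by
  classical
  rw [wso, wso, wso, Finset.sum_mul_sum, ← Fintype.sum_prod_type']
  apply Fintype.sum_equiv ((Equiv.arrowCongr finSumFinEquiv.symm (Equiv.refl (Fin N))).trans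
      (Equiv.sumArrowEquivProdArrow _ _ _))
  intro i
  rw [List.ofFn_add, List.prod_append]
  congr 1
  · exact congrArg List.prod (List.ofFn_inj.mpr (funext fun k => by
      have hk : Fin.castLE (Nat.le_add_right m n) k = Fin.castAdd n k := rfl
      simp [hk, Equiv.permCongr_apply, Equiv.sumArrowEquivProdArrow]))
  · exact congrArg List.prod (List.ofFn_inj.mpr (funext fun k => by
      simp [Equiv.permCongr_apply, Equiv.sumArrowEquivProdArrow]))

end
end

section
/- Expression of the third Casimir of 𝔰𝔭(2M) (the 𝔰𝔭 specialization of the universal relation 2C₃ = (C₀ − 2)C₂ with C₀ = −2M): in U(𝔰𝔭(2M)) one has ∑_{a,b,c : Fin (2M)} ι(X a b) · ι(X b c) · ι(X c a) = (M + 1) · ∑_{a,b : Fin (2M)} ι(X a b) · ι(X b a). -/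
open Matrix in
noncomputable section
open Matrix

attribute [local instance 100] LieRing.ofAssociativeRing

abbrev spE (M : ℕ) (a b : Fin (2*M)) : Matrix (Fin (2*M)) (Fin (2*M)) ℂ :=
  Matrix.single a b 1

lemma spE_mul (M : ℕ) (a b c d : Fin (2*M)) :
    spE M a b * spE M c d = if b = c then spE M a d else 0 := by
  split_ifs with h
  · subst h; simp [spE]
  · simp [spE, h]

lemma spXmul (M : ℕ) (a b c d : Fin (2*M)) :
    spXmat M a b * spXmat M c d =
      (if b = c then spE M a d else 0)
      - (spEps M c * spEps M d) • (if b = Fin.rev d then spE M a (Fin.rev c) else 0)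
      - (spEps M a * spEps M b) • (if Fin.rev a = c then spE M (Fin.rev b) d else 0)
      + (spEps M a * spEps M b * spEps M c * spEps M d) •
          (if a = d then spE M (Fin.rev b) (Fin.rev c) else 0) := by
  have h4 : (Fin.rev a = Fin.rev d) = (a = d) := by simp [Fin.rev_inj]
  simp only [spXmat, sub_mul, mul_sub, smul_mul_assoc, Matrix.mul_smul, spE_mul, smul_smul, h4,
    spE]
  module

lemma spSumDiag (M : ℕ) : ∑ c : Fin (2*M), spE M c c = 1 := by
  ext i j
  rw [Matrix.sum_apply]
  simp [spE, Matrix.single, Matrix.one_apply, Finset.sum_ite_eq, ite_and, eq_comm]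

lemma spSumDiagRev (M : ℕ) : ∑ c : Fin (2*M), spE M (Fin.rev c) (Fin.rev c) = 1 := by
  rw [← spSumDiag M]
  exact Fintype.sum_bijective Fin.rev Fin.rev_bijective _ _ (fun x => rfl)

lemma spSumA (M : ℕ) (a b : Fin (2*M)) :
    ∑ c, spXmat M b c * spXmat M c a
      = (2*(M:ℂ)+2) • spE M b a + (if a = b then 1 else 0) := by
  have hF : ∀ c, spXmat M b c * spXmat M c a =
      spE M b a
      - (if c = Fin.rev a then (spEps M c * spEps M a) • spE M b (Fin.rev c) else 0)
      - (if Fin.rev b = c then (spEps M b * spEps M c) • spE M (Fin.rev c) a else 0)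
      + (if b = a then (spEps M b * spEps M c * spEps M c * spEps M a) •
            spE M (Fin.rev c) (Fin.rev c) else 0) := by
    intro c
    rw [spXmul]
    simp only [if_pos rfl, smul_ite, smul_zero, eq_self_iff_true, if_true]
  simp only [hF, Finset.sum_add_distrib, Finset.sum_sub_distrib, Finset.sum_const,
    Finset.sum_ite_eq' Finset.univ, Finset.sum_ite_eq Finset.univ, Finset.mem_univ, if_true,
    Finset.card_univ, Fintype.card_fin, Fin.rev_rev, spEps_rev]
  by_cases hba : b = a
  · subst hba
    simp only [eq_self_iff_true, if_true]
    have h4 : ∀ x : Fin (2*M), (spEps M b * spEps M x * spEps M x * spEps M b) •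
        spE M (Fin.rev x) (Fin.rev x) = spE M (Fin.rev x) (Fin.rev x) := by
      intro x
      rw [show spEps M b * spEps M x * spEps M x * spEps M b = 1 by
        linear_combination (spEps M b * spEps M b) * spEps_sq M x + spEps_sq M b, one_smul]
    simp only [h4, spSumDiagRev]
    match_scalars
    · push_cast
      linear_combination 2 * spEps_sq M b
    · ring
  · simp only [hba, if_false, eq_comm (a := a) (b := b), Finset.sum_const_zero, add_zero]
    match_scalars
    push_cast
    linear_combination spEps_sq M a + spEps_sq M b

lemma spSumB (M : ℕ) (a b : Fin (2*M)) :
    ∑ c, spXmat M c a * spXmat M b c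
      = (if a = b then 1 else 0)
        + ((2*(M:ℂ)+2) * (spEps M a * spEps M b)) • spE M (Fin.rev a) (Fin.rev b) := by
  have hc1 : ∀ c : Fin (2*M), (a = Fin.rev c) = (Fin.rev a = c) := fun c =>
    propext ⟨fun h => by rw [h, Fin.rev_rev], fun h => by rw [← h, Fin.rev_rev]⟩
  have hc2 : ∀ c : Fin (2*M), (Fin.rev c = b) = (c = Fin.rev b) := fun c =>
    propext ⟨fun h => by rw [← h, Fin.rev_rev], fun h => by rw [h, Fin.rev_rev]⟩
  have hF : ∀ c, spXmat M c a * spXmat M b c =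
      (if a = b then spE M c c else 0)
      - (if Fin.rev a = c then (spEps M b * spEps M c) • spE M c (Fin.rev b) else 0)
      - (if c = Fin.rev b then (spEps M c * spEps M a) • spE M (Fin.rev a) c else 0)
      + (spEps M a * spEps M b) • spE M (Fin.rev a) (Fin.rev b) := by
    intro c
    rw [spXmul]
    simp only [smul_ite, smul_zero, eq_self_iff_true, if_true, hc1 c, hc2 c]
    match_scalars <;>
      first
        | ring1
        | linear_combination (spEps M a * spEps M b) * spEps_sq M c
  simp only [hF, Finset.sum_add_distrib, Finset.sum_sub_distrib, Finset.sum_const,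
    Finset.sum_ite_eq' Finset.univ, Finset.sum_ite_eq Finset.univ, Finset.mem_univ, if_true,
    Finset.card_univ, Fintype.card_fin, Fin.rev_rev, spEps_rev, Finset.sum_ite_irrel,
    Finset.sum_const_zero, spSumDiag]
  by_cases hab : a = b <;>
    simp only [hab, if_true, if_false, eq_self_iff_true] <;>
      match_scalars <;> ring1

lemma spX_val (M : ℕ) (a b : Fin (2*M)) :
    ((spX M a b : spL M) : Matrix (Fin (2*M)) (Fin (2*M)) ℂ) = spXmat M a b := rfl

lemma spSumBracket (M : ℕ) (a b : Fin (2*M)) :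
    ∑ c, ⁅spX M b c, spX M c a⁆ = (2*(M:ℂ)+2) • spX M b a := by
  apply Subtype.ext
  rw [AddSubmonoidClass.coe_finset_sum]
  simp only [LieSubalgebra.coe_bracket, SetLike.val_smul, spX_val, Ring.lie_def]
  rw [Finset.sum_sub_distrib, spSumA, spSumB]
  simp only [spXmat, spE]
  match_scalars <;> ring1

lemma spX_flip (M : ℕ) (a b : Fin (2*M)) :
    spX M a b = (-(spEps M a * spEps M b)) • spX M (Fin.rev b) (Fin.rev a) := by
  apply Subtype.ext
  rw [show (((-(spEps M a * spEps M b)) • spX M (Fin.rev b) (Fin.rev a) : spL M) :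
      Matrix (Fin (2*M)) (Fin (2*M)) ℂ)
    = (-(spEps M a * spEps M b)) • spXmat M (Fin.rev b) (Fin.rev a) from rfl]
  simp only [spX_val, spXmat, Fin.rev_rev, spEps_rev]
  match_scalars <;>
    first
      | (linear_combination (spEps M a * spEps M b) * spEps_sq M b
          + spEps M a * spEps M a * spEps M b * spEps M b * spEps_sq M a + spEps_sq M a)
      | (linear_combination (-(spEps M a * spEps M b)) * spEps_sq M b - spEps_sq M a)
      | (linear_combination (-(spEps M b * spEps M b)) * spEps_sq M a - spEps_sq M b)
      | ring1

lemma sp_core {n : ℕ} {U : Type*} [Ring U] [Module ℂ U] [SMulCommClass ℂ U U]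
    [IsScalarTower ℂ U U] (f : Fin n → Fin n → U) (κ : ℂ)
    (hsum : ∀ a b : Fin n, (∑ c, (f b c * f c a - f c a * f b c)) = (2*κ) • f b a)
    (hflip : ∀ a b c : Fin n, f a b * (f c a * f b c)
      = -(f (Fin.rev b) (Fin.rev a) * (f (Fin.rev a) (Fin.rev c) * f (Fin.rev c) (Fin.rev b)))) :
    (∑ a, ∑ b, ∑ c, f a b * f b c * f c a) = κ • ∑ a, ∑ b, f a b * f b a := by
  have h1 : ∀ a b : Fin n,
      ∑ c, f a b * f b c * f c a
        = (∑ c, f a b * (f c a * f b c)) + (2*κ) • (f a b * f b a) := by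
    intro a b
    have hstep : ∀ c, f a b * f b c * f c a
        = f a b * (f c a * f b c) + f a b * (f b c * f c a - f c a * f b c) := by
      intro c
      rw [mul_assoc, mul_sub]
      abel
    rw [Finset.sum_congr rfl (fun c _ => hstep c), Finset.sum_add_distrib, ← Finset.mul_sum,
      ← Finset.mul_sum, hsum, mul_smul_comm]
  have hrev3 : ∀ F : Fin n → Fin n → Fin n → U,
      (∑ a, ∑ b, ∑ c, F (Fin.rev a) (Fin.rev b) (Fin.rev c)) = ∑ a, ∑ b, ∑ c, F a b c :=
    fun F => Fintype.sum_bijective _ Fin.rev_bijective _ _ (fun a =>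
      Fintype.sum_bijective _ Fin.rev_bijective _ _ (fun b =>
        Fintype.sum_bijective _ Fin.rev_bijective _ _ (fun c => rfl)))
  have h2 : (∑ a, ∑ b, ∑ c, f a b * (f c a * f b c))
      = -∑ a, ∑ b, ∑ c, f a b * f b c * f c a := by
    calc (∑ a, ∑ b, ∑ c, f a b * (f c a * f b c))
        = -∑ a, ∑ b, ∑ c,
            f (Fin.rev b) (Fin.rev a) * (f (Fin.rev a) (Fin.rev c) * f (Fin.rev c) (Fin.rev b)) := by
          rw [← Finset.sum_neg_distrib]
          refine Finset.sum_congr rfl (fun a _ => ?_)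
          rw [← Finset.sum_neg_distrib]
          refine Finset.sum_congr rfl (fun b _ => ?_)
          rw [← Finset.sum_neg_distrib]
          exact Finset.sum_congr rfl (fun c _ => hflip a b c)
      _ = -∑ a, ∑ b, ∑ c, f b a * (f a c * f c b) := by
          rw [hrev3 (fun a b c => f b a * (f a c * f c b))]
      _ = -∑ a, ∑ b, ∑ c, f a b * f b c * f c a := by
          rw [Finset.sum_comm]
          simp only [mul_assoc]
  have htwo : (2:ℂ) • (∑ a, ∑ b, ∑ c, f a b * f b c * f c a)
      = (2*κ) • ∑ a, ∑ b, f a b * f b a := by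
    have hA : (∑ a, ∑ b, ∑ c, f a b * f b c * f c a)
        = (∑ a, ∑ b, ∑ c, f a b * (f c a * f b c))
          + (2*κ) • ∑ a, ∑ b, f a b * f b a := by
      rw [Finset.smul_sum]
      simp only [← Finset.sum_add_distrib]
      exact Finset.sum_congr rfl (fun a _ => by
        rw [Finset.smul_sum, ← Finset.sum_add_distrib]
        exact Finset.sum_congr rfl (fun b _ => h1 a b))
    rw [two_smul]
    nth_rewrite 1 [hA]
    rw [h2]
    module
  calc (∑ a, ∑ b, ∑ c, f a b * f b c * f c a)
      = (2:ℂ)⁻¹ • ((2:ℂ) • ∑ a, ∑ b, ∑ c, f a b * f b c * f c a) := by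
        rw [smul_smul]; norm_num
    _ = (2:ℂ)⁻¹ • ((2*κ) • ∑ a, ∑ b, f a b * f b a) := by rw [htwo]
    _ = κ • ∑ a, ∑ b, f a b * f b a := by
        rw [smul_smul, show (2:ℂ)⁻¹ * (2*κ) = κ by field_simp]

/-- C₃ = (M + 1)·C₂ in U(𝔰𝔭(2M)). -/
theorem sp_casimir_three (M : ℕ) :
    (∑ a : Fin (2 * M), ∑ b : Fin (2 * M), ∑ c : Fin (2 * M),
        UniversalEnvelopingAlgebra.ι ℂ (spX M a b) *
          UniversalEnvelopingAlgebra.ι ℂ (spX M b c) *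
          UniversalEnvelopingAlgebra.ι ℂ (spX M c a)) =
      ((M : ℂ) + 1) • ∑ a : Fin (2 * M), ∑ b : Fin (2 * M),
        UniversalEnvelopingAlgebra.ι ℂ (spX M a b) *
          UniversalEnvelopingAlgebra.ι ℂ (spX M b a) := by
  refine sp_core (fun a b => UniversalEnvelopingAlgebra.ι ℂ (spX M a b)) ((M:ℂ)+1) ?_ ?_
  · intro a b
    have hlie : ∀ c, UniversalEnvelopingAlgebra.ι ℂ (spX M b c) *
          UniversalEnvelopingAlgebra.ι ℂ (spX M c a)
        - UniversalEnvelopingAlgebra.ι ℂ (spX M c a) *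
          UniversalEnvelopingAlgebra.ι ℂ (spX M b c)
        = UniversalEnvelopingAlgebra.ι ℂ ⁅spX M b c, spX M c a⁆ := by
      intro c
      rw [LieHom.map_lie, Ring.lie_def]
    simp only [hlie]
    rw [show (∑ c, UniversalEnvelopingAlgebra.ι ℂ ⁅spX M b c, spX M c a⁆)
        = (UniversalEnvelopingAlgebra.ι ℂ).toLinearMap (∑ c, ⁅spX M b c, spX M c a⁆) from
        (map_sum (UniversalEnvelopingAlgebra.ι ℂ).toLinearMap _ Finset.univ).symm,
      spSumBracket, LinearMap.map_smul, LieHom.coe_toLinearMap]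
    congr 1
    ring
  · intro a b c
    have hsc : -(spEps M b * spEps M c) * -(spEps M c * spEps M a) * -(spEps M a * spEps M b)
        = -1 := by
      linear_combination (-(spEps M b * spEps M b * spEps M c * spEps M c)) * spEps_sq M a
        - (spEps M c * spEps M c) * spEps_sq M b - spEps_sq M c
    rw [spX_flip M a b, spX_flip M c a, spX_flip M b c]
    simp only [map_smul, smul_mul_assoc, mul_smul_comm, smul_smul]
    rw [hsc, neg_one_smul]


end
end
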